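/- For every nonnegative integer n, ∫_0^1 log Γ(x) sin((2n+1)πx) dx = (1/((2n+1)π)) [log(π/2) + 1/(2n+1) + 2 ∑_{k=1}^{n} 1/(2k-1)]. -/

import Mathlib

open Real Finset MeasureTheory intervalIntegral Set Filter Topology

lemma trig_ident (n : ℕ) (u : ℝ) :
    Real.cos ((2*n+1)*u) * Real.cos u
      = 1 - Real.sin u * Real.sin ((2*n+1)*u)
        - 2 * ∑ j ∈ Finset.Icc 1 n, Real.sin u * Real.sin ((2*(j:ℝ)-1)*u) := by
  induction n with
  | zero =>
    simp only [Nat.cast_zero, Finset.Icc_self]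
    norm_num
    nlinarith [Real.sin_sq_add_cos_sq u]
  | succ n ih =>
    rw [Finset.sum_Icc_succ_top (by omega : 1 ≤ n + 1)]
    push_cast
    have h1 : (2*((n:ℝ)+1)+1)*u = (2*(n:ℝ)+1)*u + 2*u := by ring
    have h2 : (2*((n:ℝ)+1)-1)*u = (2*(n:ℝ)+1)*u := by ring
    rw [h1, h2, Real.cos_add, Real.sin_add, Real.cos_two_mul, Real.sin_two_mul]
    linear_combination ih + 2*Real.cos u*Real.cos ((2*(n:ℝ)+1)*u) * (Real.sin_sq_add_cos_sq u)

lemma half_angle (u : ℝ) :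
    (Real.cos u - 1) * Real.cos (u/2) = - (Real.sin (u/2) * Real.sin u) := by
  have h1 : Real.cos u = 2 * Real.cos (u / 2) ^ 2 - 1 := by
    rw [show u = 2*(u/2) by ring, Real.cos_two_mul]; ring_nf
  have h2 : Real.sin u = 2 * Real.sin (u / 2) * Real.cos (u / 2) := by
    rw [show u = 2*(u/2) by ring, Real.sin_two_mul]; ring_nf
  linear_combination Real.cos (u/2)*h1 + Real.sin (u/2)*h2 + 2*Real.cos (u/2)*(Real.sin_sq_add_cos_sq (u/2))

noncomputable def F (n : ℕ) (x : ℝ) : ℝ :=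
  (1 - Real.cos ((2*(n:ℝ)+1)*π*x)) * Real.log (Real.sin (π*x))
  - 2 * Real.log (Real.cos (π*x/2))
  + Real.cos ((2*(n:ℝ)+1)*π*x)/(2*(n:ℝ)+1)
  + 2 * ∑ j ∈ Finset.Icc 1 n, Real.cos ((2*(j:ℝ)-1)*π*x)/(2*(j:ℝ)-1)

lemma F_hasDeriv (n : ℕ) {x : ℝ} (hx1 : 0 < x) (hx2 : x < 1) :
    HasDerivAt (F n)
      ((2*(n:ℝ)+1)*π * (Real.log (Real.sin (π*x)) * Real.sin ((2*(n:ℝ)+1)*π*x))) x := by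
  have hpi := Real.pi_pos
  have hs : 0 < Real.sin (π*x) :=
    Real.sin_pos_of_pos_of_lt_pi (by positivity) (by nlinarith)
  have hc : 0 < Real.cos (π*x/2) := by
    apply Real.cos_pos_of_mem_Ioo
    constructor <;> [nlinarith; nlinarith]
  have d1 : HasDerivAt (fun x:ℝ => (2*(n:ℝ)+1)*π*x) ((2*(n:ℝ)+1)*π) x := by
    simpa using (hasDerivAt_id x).const_mul ((2*(n:ℝ)+1)*π)
  have dcos : HasDerivAt (fun x => Real.cos ((2*(n:ℝ)+1)*π*x))
      (-Real.sin ((2*(n:ℝ)+1)*π*x) * ((2*(n:ℝ)+1)*π)) x := d1.cos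
  have dsin : HasDerivAt (fun x => Real.sin (π*x)) (Real.cos (π*x) * π) x := by
    simpa using ((hasDerivAt_id x).const_mul π).sin
  have dlogsin : HasDerivAt (fun x => Real.log (Real.sin (π*x)))
      (Real.cos (π*x) * π / Real.sin (π*x)) x := dsin.log hs.ne'
  have d2 : HasDerivAt (fun x:ℝ => π*x/2) (π/2) x := by
    simpa using ((hasDerivAt_id x).const_mul π).div_const 2
  have dlogcos : HasDerivAt (fun x => Real.log (Real.cos (π*x/2)))
      (-Real.sin (π*x/2) * (π/2) / Real.cos (π*x/2)) x := d2.cos.log hc.ne'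
  have dsum : HasDerivAt (fun x => ∑ j ∈ Finset.Icc 1 n, Real.cos ((2*(j:ℝ)-1)*π*x)/(2*(j:ℝ)-1))
      (∑ j ∈ Finset.Icc 1 n, (-π * Real.sin ((2*(j:ℝ)-1)*π*x))) x := by
    apply HasDerivAt.fun_sum
    intro j hj
    have hj1 : (1:ℕ) ≤ j := (Finset.mem_Icc.1 hj).1
    have hjne : (2*(j:ℝ)-1) ≠ 0 := by
      have : (1:ℝ) ≤ (j:ℝ) := by exact_mod_cast hj1
      nlinarith
    have dj : HasDerivAt (fun x:ℝ => (2*(j:ℝ)-1)*π*x) ((2*(j:ℝ)-1)*π) x := by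
      simpa using (hasDerivAt_id x).const_mul ((2*(j:ℝ)-1)*π)
    have := (dj.cos).div_const (2*(j:ℝ)-1)
    exact this.congr_deriv (by rw [div_eq_iff hjne]; ring)
  have dF : HasDerivAt (F n)
      ((-(-Real.sin ((2*(n:ℝ)+1)*π*x) * ((2*(n:ℝ)+1)*π))) * Real.log (Real.sin (π*x))
        + (1 - Real.cos ((2*(n:ℝ)+1)*π*x)) * (Real.cos (π*x) * π / Real.sin (π*x))
        - 2 * (-Real.sin (π*x/2) * (π/2) / Real.cos (π*x/2))
        + (-Real.sin ((2*(n:ℝ)+1)*π*x) * ((2*(n:ℝ)+1)*π))/(2*(n:ℝ)+1)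
        + 2 * ∑ j ∈ Finset.Icc 1 n, (-π * Real.sin ((2*(j:ℝ)-1)*π*x))) x := by
    exact ((((dcos.const_sub 1).mul dlogsin).sub (dlogcos.const_mul 2)).add
      (dcos.div_const _)).add (dsum.const_mul 2)
  convert dF using 1
  have hn : (2*(n:ℝ)+1) ≠ 0 := by positivity
  have key := trig_ident n (π*x)
  have hha := half_angle (π*x)
  simp only [← mul_assoc] at key
  field_simp
  simp only [← Finset.mul_sum] at key ⊢
  have hsum' : (∑ x_1 ∈ Finset.Icc 1 n, -(π * Real.sin (π * x * (2 * (x_1:ℝ) - 1))))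
      = -π * ∑ i ∈ Finset.Icc 1 n, Real.sin ((2 * (i:ℝ) - 1) * π * x) := by
    rw [Finset.mul_sum]; exact Finset.sum_congr rfl fun i _ => by ring_nf
  rw [hsum']
  linear_combination π*Real.cos (π*x/2)*key - π*hha


lemma log_intervalIntegrable : IntervalIntegrable Real.log volume 0 1 := by
  have h : IntervalIntegrable (fun x : ℝ => -Real.log x) volume 0 1 := by
    apply intervalIntegrable_deriv_of_nonneg (g := fun x => x - x * Real.log x)
    · exact (continuous_id.sub Real.continuous_mul_log).continuousOn
    · intro x hx
      simp only [min_def, max_def] at hx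
      norm_num at hx
      have h1 : HasDerivAt (fun y : ℝ => y * Real.log y) (Real.log x + 1) x := by
        have := (hasDerivAt_id x).mul (Real.hasDerivAt_log hx.1.ne')
        exact this.congr_deriv (by simp [hx.1.ne'])
      have := (hasDerivAt_id x).sub h1
      exact this.congr_deriv (by ring)
    · intro x hx
      simp only [min_def, max_def] at hx
      norm_num at hx
      simp only [neg_nonneg]
      exact Real.log_nonpos hx.1.le hx.2.le
  have := h.neg
  simp only [Pi.neg_def] at this
  convert this using 1
  ext x; simp

lemma log_sin_intervalIntegrable :
    IntervalIntegrable (fun x => Real.log (Real.sin (π * x))) volume 0 (1/2) := by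
  have hpi := Real.pi_pos
  rw [intervalIntegrable_iff, uIoc_of_le (by norm_num : (0:ℝ) ≤ 1/2)]
  have hlog : IntegrableOn Real.log (Ioc (0:ℝ) (1/2)) volume := by
    have := (log_intervalIntegrable.mono_set (by
      rw [uIcc_of_le (by norm_num : (0:ℝ) ≤ 1/2), uIcc_of_le (by norm_num : (0:ℝ) ≤ 1)]
      exact Icc_subset_Icc le_rfl (by norm_num)))
    rwa [intervalIntegrable_iff, uIoc_of_le (by norm_num : (0:ℝ) ≤ 1/2)] at this
  apply MeasureTheory.Integrable.mono hlog
  · exact (Real.measurable_log.comp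
      (Real.continuous_sin.measurable.comp (measurable_const_mul π))).aestronglyMeasurable
  · rw [ae_restrict_iff' measurableSet_Ioc]
    filter_upwards with x hx
    obtain ⟨hx0, hx12⟩ := hx
    have hsx : x ≤ Real.sin (π * x) := by
      have h2 : 2 / π * (π * x) ≤ Real.sin (π * x) :=
        Real.mul_le_sin (by positivity) (by nlinarith)
      have : 2 / π * (π * x) = 2 * x := by field_simp
      nlinarith
    have hs1 : Real.sin (π * x) ≤ 1 := Real.sin_le_one _
    have hlx : Real.log x ≤ Real.log (Real.sin (π * x)) :=
      Real.log_le_log hx0 hsx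
    have hle0 : Real.log (Real.sin (π * x)) ≤ 0 := Real.log_nonpos (by linarith) hs1
    have hlx0 : Real.log x ≤ 0 := Real.log_nonpos hx0.le (by linarith)
    rw [Real.norm_eq_abs, Real.norm_eq_abs, abs_of_nonpos hle0, abs_of_nonpos hlx0]
    linarith

lemma one_sub_cos_le (t : ℝ) : 1 - Real.cos t ≤ t^2/2 := by
  have h := Real.cos_two_mul (t/2)
  rw [show 2*(t/2) = t by ring] at h
  nlinarith [(Real.sin_sq_le_sq (x := t/2)), Real.sin_sq_add_cos_sq (t/2)]

lemma F_lim_zero (n : ℕ) :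
    Tendsto (F n) (𝓝[>] (0:ℝ))
      (𝓝 (1/(2*(n:ℝ)+1) + 2 * ∑ j ∈ Finset.Icc 1 n, 1/(2*(j:ℝ)-1))) := by
  have hpi := Real.pi_pos
  set c : ℝ := (2*(n:ℝ)+1)*π with hc
  have hcpos : 0 < c := by positivity
  have hA : Tendsto (fun x => (1 - Real.cos (c*x)) * Real.log (Real.sin (π*x)))
      (𝓝[>] (0:ℝ)) (𝓝 0) := by
    have hg : Tendsto (fun x : ℝ => c^2/2 * (Real.log x * x^2)) (𝓝[>] (0:ℝ)) (𝓝 0) := by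
      have h0 : Tendsto (fun x : ℝ => Real.log x * x^(2:ℝ)) (𝓝[>] (0:ℝ)) (𝓝 0) :=
        tendsto_log_mul_rpow_nhdsGT_zero (by norm_num)
      have h1 : Tendsto (fun x : ℝ => Real.log x * x^2) (𝓝[>] (0:ℝ)) (𝓝 0) := by
        apply h0.congr'
        filter_upwards [self_mem_nhdsWithin] with x hx
        rw [show (2:ℝ) = ((2:ℕ):ℝ) by norm_num, Real.rpow_natCast]
      simpa using h1.const_mul (c^2/2)
    apply tendsto_of_tendsto_of_tendsto_of_le_of_le' hg tendsto_const_nhds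
    · filter_upwards [Ioo_mem_nhdsGT_of_mem (left_mem_Ico.2 (by norm_num : (0:ℝ) < 1/2))]
        with x hx
      obtain ⟨hx0, hx12⟩ := hx
      have hsx : x ≤ Real.sin (π * x) := by
        have h2 : 2 / π * (π * x) ≤ Real.sin (π * x) :=
          Real.mul_le_sin (by positivity) (by nlinarith)
        have h3 : 2 / π * (π * x) = 2 * x := by field_simp
        nlinarith
      have hs1 : Real.sin (π * x) ≤ 1 := Real.sin_le_one _
      have hlogle : Real.log x ≤ Real.log (Real.sin (π*x)) := Real.log_le_log hx0 hsx
      have hlogsin0 : Real.log (Real.sin (π*x)) ≤ 0 := Real.log_nonpos (by linarith) hs1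
      have hlx0 : Real.log x ≤ 0 := Real.log_nonpos hx0.le (by linarith)
      have hcos1 : 0 ≤ 1 - Real.cos (c*x) := by nlinarith [Real.cos_le_one (c*x)]
      have hcos2 : 1 - Real.cos (c*x) ≤ c^2*x^2/2 := by
        have := one_sub_cos_le (c*x); nlinarith
      have hm : (1 - Real.cos (c*x)) * Real.log x
          ≤ (1 - Real.cos (c*x)) * Real.log (Real.sin (π*x)) :=
        mul_le_mul_of_nonneg_left hlogle hcos1
      nlinarith
    · filter_upwards [Ioo_mem_nhdsGT_of_mem (left_mem_Ico.2 (by norm_num : (0:ℝ) < 1/2))]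
        with x hx
      obtain ⟨hx0, hx12⟩ := hx
      have hsx : 0 < Real.sin (π * x) :=
        Real.sin_pos_of_pos_of_lt_pi (by positivity) (by nlinarith)
      have hlogsin0 : Real.log (Real.sin (π*x)) ≤ 0 :=
        Real.log_nonpos hsx.le (Real.sin_le_one _)
      have hcos1 : 0 ≤ 1 - Real.cos (c*x) := by nlinarith [Real.cos_le_one (c*x)]
      nlinarith
  have hB : Tendsto (fun x => 2 * Real.log (Real.cos (π*x/2))) (𝓝[>] (0:ℝ)) (𝓝 0) := by
    have hcont : ContinuousAt (fun x => 2 * Real.log (Real.cos (π*x/2))) 0 := by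
      apply ContinuousAt.mul continuousAt_const
      apply ContinuousAt.log
      · exact (Real.continuous_cos.comp ((continuous_const.mul continuous_id).div_const 2)).continuousAt
      · simp
    have := hcont.tendsto.mono_left (nhdsWithin_le_nhds : 𝓝[>] (0:ℝ) ≤ 𝓝 0)
    simpa using this
  have hC : Tendsto (fun x => Real.cos (c*x)/(2*(n:ℝ)+1)) (𝓝[>] (0:ℝ))
      (𝓝 (1/(2*(n:ℝ)+1))) := by
    have hcont : ContinuousAt (fun x => Real.cos (c*x)/(2*(n:ℝ)+1)) 0 :=
      ((Real.continuous_cos.comp (continuous_const.mul continuous_id)).div_const _).continuousAt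
    have := hcont.tendsto.mono_left (nhdsWithin_le_nhds : 𝓝[>] (0:ℝ) ≤ 𝓝 0)
    simpa using this
  have hD : Tendsto (fun x => 2 * ∑ j ∈ Finset.Icc 1 n, Real.cos ((2*(j:ℝ)-1)*π*x)/(2*(j:ℝ)-1))
      (𝓝[>] (0:ℝ)) (𝓝 (2 * ∑ j ∈ Finset.Icc 1 n, 1/(2*(j:ℝ)-1))) := by
    have hcont : ContinuousAt
        (fun x => 2 * ∑ j ∈ Finset.Icc 1 n, Real.cos ((2*(j:ℝ)-1)*π*x)/(2*(j:ℝ)-1)) 0 := by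
      apply ContinuousAt.mul continuousAt_const
      exact (continuous_finset_sum _ fun j hj =>
        ((Real.continuous_cos.comp (continuous_const.mul continuous_id)).div_const _)).continuousAt
    have := hcont.tendsto.mono_left (nhdsWithin_le_nhds : 𝓝[>] (0:ℝ) ≤ 𝓝 0)
    simpa using this
  have := ((hA.sub hB).add hC).add hD
  unfold F
  simpa [hc] using this

lemma F_lim_half (n : ℕ) :
    Tendsto (F n) (𝓝[<] (1/2:ℝ)) (𝓝 (Real.log 2)) := by
  have hpi := Real.pi_pos
  have h14 : Real.cos (π*(1/2:ℝ)/2) = Real.sqrt 2 / 2 := by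
    rw [show π*(1/2:ℝ)/2 = π/4 by ring]; exact Real.cos_pi_div_four
  have hsin1 : Real.sin (π*(1/2:ℝ)) = 1 := by
    rw [show π*(1/2:ℝ) = π/2 by ring]; exact Real.sin_pi_div_two
  have hcosc : Real.cos ((2*(n:ℝ)+1)*π*(1/2:ℝ)) = 0 := by
    apply Real.cos_eq_zero_iff.mpr
    exact ⟨n, by push_cast; ring⟩
  have hcont : ContinuousAt (F n) (1/2:ℝ) := by
    unfold F
    apply ContinuousAt.add
    apply ContinuousAt.add
    apply ContinuousAt.sub
    · apply ContinuousAt.mul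
      · exact (continuous_const.sub
          (Real.continuous_cos.comp (continuous_const.mul continuous_id))).continuousAt
      · apply ContinuousAt.log
        · exact (Real.continuous_sin.comp (continuous_const.mul continuous_id)).continuousAt
        · rw [hsin1]; norm_num
    · apply ContinuousAt.mul continuousAt_const
      apply ContinuousAt.log
      · exact (Real.continuous_cos.comp
          ((continuous_const.mul continuous_id).div_const 2)).continuousAt
      · rw [h14]; positivity
    · exact ((Real.continuous_cos.comp
        (continuous_const.mul continuous_id)).div_const _).continuousAt
    · exact (continuous_const.mul (continuous_finset_sum _ fun j hj =>
        ((Real.continuous_cos.comp (continuous_const.mul continuous_id)).div_const _))).continuousAt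
  have hval : F n (1/2:ℝ) = Real.log 2 := by
    unfold F
    rw [hcosc, hsin1, h14, Real.log_one]
    have hsum : ∀ j ∈ Finset.Icc 1 n, Real.cos ((2*(j:ℝ)-1)*π*(1/2:ℝ))/(2*(j:ℝ)-1) = 0 := by
      intro j hj
      have hj1 : (1:ℕ) ≤ j := (Finset.mem_Icc.1 hj).1
      have : Real.cos ((2*(j:ℝ)-1)*π*(1/2:ℝ)) = 0 := by
        apply Real.cos_eq_zero_iff.mpr
        refine ⟨(j:ℤ) - 1, ?_⟩
        push_cast [hj1]
        ring
      rw [this, zero_div]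
    rw [Finset.sum_congr rfl hsum]
    have hlog : Real.log (Real.sqrt 2 / 2) = Real.log 2 / 2 - Real.log 2 := by
      rw [Real.log_div (by positivity) (by norm_num), Real.log_sqrt (by norm_num)]
    rw [hlog]
    simp
    ring
  have := hcont.tendsto.mono_left (nhdsWithin_le_nhds : 𝓝[<] (1/2:ℝ) ≤ 𝓝 (1/2))
  rwa [hval] at this

lemma Jhalf (n : ℕ) :
    ∫ x in (0:ℝ)..(1/2), Real.log (Real.sin (π*x)) * Real.sin ((2*(n:ℝ)+1)*π*x)
      = (1/((2*(n:ℝ)+1)*π)) * (Real.log 2 - 1/(2*(n:ℝ)+1)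
          - 2 * ∑ j ∈ Finset.Icc 1 n, 1/(2*(j:ℝ)-1)) := by
  have hpi := Real.pi_pos
  have hcpos : (0:ℝ) < (2*(n:ℝ)+1)*π := by positivity
  have hderiv : ∀ x ∈ Ioo (0:ℝ) (1/2),
      HasDerivAt (fun y => F n y / ((2*(n:ℝ)+1)*π))
        (Real.log (Real.sin (π*x)) * Real.sin ((2*(n:ℝ)+1)*π*x)) x := by
    intro x hx
    have := (F_hasDeriv n hx.1 (lt_trans hx.2 (by norm_num))).div_const ((2*(n:ℝ)+1)*π)
    exact this.congr_deriv (by field_simp)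
  have hint : IntervalIntegrable
      (fun x => Real.log (Real.sin (π*x)) * Real.sin ((2*(n:ℝ)+1)*π*x)) volume 0 (1/2) :=
    log_sin_intervalIntegrable.mul_continuousOn
      ((Real.continuous_sin.comp (continuous_const.mul continuous_id)).continuousOn)
  have h0 := (F_lim_zero n).div_const ((2*(n:ℝ)+1)*π)
  have hh := (F_lim_half n).div_const ((2*(n:ℝ)+1)*π)
  rw [integral_eq_sub_of_hasDerivAt_of_tendsto (by norm_num) hderiv hint h0 hh]
  field_simp
  ring

lemma sin_odd_pi_sub (n : ℕ) (y : ℝ) :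
    Real.sin ((2*(n:ℝ)+1)*π - y) = Real.sin y := by
  have h1 : Real.sin ((2*(n:ℝ)+1)*π) = 0 := by
    have := Real.sin_int_mul_pi (2*(n:ℤ)+1)
    push_cast at this
    linarith [this]
  have h2 : Real.cos ((2*(n:ℝ)+1)*π) = -1 := by
    rw [show (2*(n:ℝ)+1)*π = (n:ℝ)*(2*π) + π by ring]
    exact Real.cos_nat_mul_two_pi_add_pi n
  rw [Real.sin_sub, h1, h2]
  ring

lemma g_symm (n : ℕ) (x : ℝ) :
    Real.log (Real.sin (π*(1-x))) * Real.sin ((2*(n:ℝ)+1)*π*(1-x))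
      = Real.log (Real.sin (π*x)) * Real.sin ((2*(n:ℝ)+1)*π*x) := by
  rw [show π*(1-x) = π - π*x by ring, Real.sin_pi_sub,
    show (2*(n:ℝ)+1)*π*(1-x) = (2*(n:ℝ)+1)*π - (2*(n:ℝ)+1)*π*x by ring,
    sin_odd_pi_sub]

lemma log_sin_sin_intervalIntegrable01 (n : ℕ) :
    IntervalIntegrable (fun x => Real.log (Real.sin (π*x)) * Real.sin ((2*(n:ℝ)+1)*π*x))
      volume 0 1 := by
  have h1 : IntervalIntegrable
      (fun x => Real.log (Real.sin (π*x)) * Real.sin ((2*(n:ℝ)+1)*π*x)) volume 0 (1/2) :=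
    log_sin_intervalIntegrable.mul_continuousOn
      ((Real.continuous_sin.comp (continuous_const.mul continuous_id)).continuousOn)
  have h2 := h1.comp_sub_left 1
  norm_num at h2
  rw [funext (g_symm n)] at h2
  exact h1.trans h2.symm

lemma Jfull (n : ℕ) :
    ∫ x in (0:ℝ)..1, Real.log (Real.sin (π*x)) * Real.sin ((2*(n:ℝ)+1)*π*x)
      = (2/((2*(n:ℝ)+1)*π)) * (Real.log 2 - 1/(2*(n:ℝ)+1)
          - 2 * ∑ j ∈ Finset.Icc 1 n, 1/(2*(j:ℝ)-1)) := by
  have h1 : IntervalIntegrable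
      (fun x => Real.log (Real.sin (π*x)) * Real.sin ((2*(n:ℝ)+1)*π*x)) volume 0 (1/2) :=
    log_sin_intervalIntegrable.mul_continuousOn
      ((Real.continuous_sin.comp (continuous_const.mul continuous_id)).continuousOn)
  have h2 : IntervalIntegrable
      (fun x => Real.log (Real.sin (π*x)) * Real.sin ((2*(n:ℝ)+1)*π*x)) volume (1/2) 1 :=
    ((log_sin_sin_intervalIntegrable01 n).symm.mono_set (by
      rw [uIcc_of_ge (by norm_num : (1:ℝ) ≥ 1/2), uIcc_of_ge (by norm_num : (1:ℝ) ≥ 0)]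
      exact Icc_subset_Icc (by norm_num) le_rfl)).symm
  have hsplit := integral_add_adjacent_intervals h1 h2
  have hrefl : ∫ x in (1/2:ℝ)..1, Real.log (Real.sin (π*x)) * Real.sin ((2*(n:ℝ)+1)*π*x)
      = ∫ x in (0:ℝ)..(1/2), Real.log (Real.sin (π*x)) * Real.sin ((2*(n:ℝ)+1)*π*x) := by
    have hc := integral_comp_sub_left
      (fun x => Real.log (Real.sin (π*x)) * Real.sin ((2*(n:ℝ)+1)*π*x)) 1
      (a := 0) (b := (1/2:ℝ))
    norm_num at hc
    rw [← hc]
    apply integral_congr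
    intro x _
    exact g_symm n x
  rw [← hsplit, hrefl, Jhalf n]
  ring

lemma logGamma_intervalIntegrable :
    IntervalIntegrable (fun x => Real.log (Real.Gamma x)) volume 0 1 := by
  have hcont : ContinuousOn (fun x : ℝ => Real.log (Real.Gamma (x+1))) (uIcc 0 1) := by
    intro x hx
    rw [uIcc_of_le (by norm_num : (0:ℝ) ≤ 1)] at hx
    apply ContinuousWithinAt.log
    · apply ContinuousAt.continuousWithinAt
      exact (Real.differentiableAt_Gamma (fun m => by
        have h0 : (0:ℝ) ≤ x := hx.1
        have h1 : (0:ℝ) ≤ (m:ℝ) := Nat.cast_nonneg m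
        intro h; nlinarith)).continuousAt.comp
        (continuous_id.add continuous_const).continuousAt
    · exact (Real.Gamma_pos_of_pos (by linarith [hx.1] : (0:ℝ) < x + 1)).ne'
  have h1 : IntervalIntegrable (fun x : ℝ => Real.log (Real.Gamma (x+1)) - Real.log x)
      volume 0 1 := (hcont.intervalIntegrable).sub log_intervalIntegrable
  rw [intervalIntegrable_iff, uIoc_of_le (by norm_num : (0:ℝ) ≤ 1)] at h1 ⊢
  apply h1.congr_fun ?_ measurableSet_Ioc
  intro x hx
  have hx0 : 0 < x := hx.1
  show Real.log (Real.Gamma (x+1)) - Real.log x = Real.log (Real.Gamma x)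
  rw [Real.Gamma_add_one hx0.ne', Real.log_mul hx0.ne' (Real.Gamma_pos_of_pos hx0).ne']
  ring

theorem stmt_14 (n : ℕ) :
    ∫ x in (0:ℝ)..1, Real.log (Real.Gamma x) * Real.sin ((2 * (n : ℝ) + 1) * Real.pi * x) =
      (1 / ((2 * (n : ℝ) + 1) * Real.pi)) *
        (Real.log (Real.pi / 2) + 1 / (2 * (n : ℝ) + 1) +
          2 * ∑ k ∈ Finset.Icc 1 n, (1 : ℝ) / (2 * (k : ℝ) - 1)) := by
  have hpi := Real.pi_pos
  set c : ℝ := (2*(n:ℝ)+1)*π with hc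
  have hcpos : 0 < c := by positivity
  set I : ℝ := ∫ x in (0:ℝ)..1, Real.log (Real.Gamma x) * Real.sin (c*x) with hI
  -- integrability
  have hsin_cont : Continuous (fun x : ℝ => Real.sin (c*x)) :=
    Real.continuous_sin.comp (continuous_const.mul continuous_id)
  have hint1 : IntervalIntegrable (fun x => Real.log (Real.Gamma x) * Real.sin (c*x))
      volume 0 1 := logGamma_intervalIntegrable.mul_continuousOn hsin_cont.continuousOn
  have hint2 : IntervalIntegrable (fun x => Real.log (Real.Gamma (1-x)) * Real.sin (c*x))
      volume 0 1 := by
    have := (logGamma_intervalIntegrable.comp_sub_left 1)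
    norm_num at this
    exact this.symm.mul_continuousOn hsin_cont.continuousOn
  -- reflection
  have hrefl : ∫ x in (0:ℝ)..1, Real.log (Real.Gamma (1-x)) * Real.sin (c*x) = I := by
    have hc2 := integral_comp_sub_left
      (fun x => Real.log (Real.Gamma x) * Real.sin (c*x)) 1 (a := 0) (b := (1:ℝ))
    norm_num at hc2
    rw [hI, ← hc2]
    apply integral_congr
    intro x _
    simp only
    rw [show c*(1-x) = c - c*x by ring, hc, sin_odd_pi_sub]
  -- sum of the two integrals
  have hsum : I + I = ∫ x in (0:ℝ)..1,
      (Real.log (Real.Gamma x) * Real.sin (c*x)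
        + Real.log (Real.Gamma (1-x)) * Real.sin (c*x)) := by
    rw [integral_add hint1 hint2, hI, hrefl]
  -- rewrite via reflection formula
  have hae : ∀ᵐ x : ℝ ∂volume, x ∈ Set.uIoc (0:ℝ) 1 →
      Real.log (Real.Gamma x) * Real.sin (c*x)
        + Real.log (Real.Gamma (1-x)) * Real.sin (c*x)
      = (Real.log π - Real.log (Real.sin (π*x))) * Real.sin (c*x) := by
    have hne : ∀ᵐ x : ℝ ∂volume, x ≠ 1 := by
      rw [ae_iff]
      simp only [ne_eq, not_not, setOf_eq_eq_singleton]
      exact measure_singleton 1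
    filter_upwards [hne] with x hx1 hx
    rw [uIoc_of_le (by norm_num : (0:ℝ) ≤ 1)] at hx
    have hx0 : 0 < x := hx.1
    have hxlt : x < 1 := lt_of_le_of_ne hx.2 hx1
    have hg1 : 0 < Real.Gamma x := Real.Gamma_pos_of_pos hx0
    have hg2 : 0 < Real.Gamma (1-x) := Real.Gamma_pos_of_pos (by linarith)
    have hs : 0 < Real.sin (π*x) :=
      Real.sin_pos_of_pos_of_lt_pi (by positivity) (by nlinarith)
    have hrefl2 : Real.Gamma x * Real.Gamma (1-x) = π / Real.sin (π*x) :=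
      Real.Gamma_mul_Gamma_one_sub x
    have : Real.log (Real.Gamma x) + Real.log (Real.Gamma (1-x))
        = Real.log π - Real.log (Real.sin (π*x)) := by
      rw [← Real.log_mul hg1.ne' hg2.ne', hrefl2, Real.log_div (by positivity) hs.ne']
    rw [← add_mul, this]
  have hsum2 : I + I = ∫ x in (0:ℝ)..1,
      (Real.log π - Real.log (Real.sin (π*x))) * Real.sin (c*x) := by
    rw [hsum]; exact integral_congr_ae hae
  -- split the RHS
  have hint3 : IntervalIntegrable (fun x => Real.log π * Real.sin (c*x)) volume 0 1 :=
    (continuous_const.mul hsin_cont).intervalIntegrable 0 1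
  have hsplit : ∫ x in (0:ℝ)..1, (Real.log π - Real.log (Real.sin (π*x))) * Real.sin (c*x)
      = (∫ x in (0:ℝ)..1, Real.log π * Real.sin (c*x))
        - ∫ x in (0:ℝ)..1, Real.log (Real.sin (π*x)) * Real.sin (c*x) := by
    rw [← integral_sub hint3 (log_sin_sin_intervalIntegrable01 n)]
    apply integral_congr
    intro x _
    ring
  -- compute ∫ sin(cx)
  have hsin_int : ∫ x in (0:ℝ)..1, Real.sin (c*x) = 2/c := by
    rw [integral_comp_mul_left (fun y => Real.sin y) hcpos.ne']
    norm_num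
    have h2 : Real.cos c = -1 := by
      rw [hc, show (2*(n:ℝ)+1)*π = (n:ℝ)*(2*π) + π by ring]
      exact Real.cos_nat_mul_two_pi_add_pi n
    rw [h2]
    field_simp
    norm_num
  have hconst : ∫ x in (0:ℝ)..1, Real.log π * Real.sin (c*x) = Real.log π * (2/c) := by
    rw [intervalIntegral.integral_const_mul, hsin_int]
  -- assemble
  have hJ := Jfull n
  rw [← hc] at hJ
  have hfinal : I + I = Real.log π * (2/c)
      - (2/c) * (Real.log 2 - 1/(2*(n:ℝ)+1) - 2 * ∑ j ∈ Finset.Icc 1 n, 1/(2*(j:ℝ)-1)) := by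
    rw [hsum2, hsplit, hconst, hJ]
  have hlogdiv : Real.log (π/2) = Real.log π - Real.log 2 :=
    Real.log_div (by positivity) (by norm_num)
  have hgoal : I = (1/c) * (Real.log (π/2) + 1/(2*(n:ℝ)+1)
      + 2 * ∑ k ∈ Finset.Icc 1 n, (1:ℝ)/(2*(k:ℝ)-1)) := by
    rw [hlogdiv]
    linear_combination (1/2 : ℝ) * hfinal
  exact hgoal
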